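/- The real algebraic surface X = {(x,y,z) ∈ ℝ³ : x² + y³ + z³ = 0} is not LNE at 0. Specifically, for the arcs γ±(t) = (±t^{3/2}, −t, 0), any path in X joining γ−(t) to γ+(t) has length at least t, while ‖γ+(t) − γ−(t)‖ = 2t^{3/2}, so d_X(γ−(t),γ+(t))/‖γ−(t)−γ+(t)‖ → ∞ as t → 0⁺. -/

import Mathlib

open Set Metric Filter Topology Pointwise

noncomputable def innerDist {E : Type*} [NormedAddCommGroup E] (Z : Set E) (x y : E) : ENNReal :=
  ⨅ (γ : ℝ → E) (_ : ContinuousOn γ (Set.Icc 0 1)) (_ : Set.MapsTo γ (Set.Icc 0 1) Z)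
    (_ : γ 0 = x) (_ : γ 1 = y), eVariationOn γ (Set.Icc 0 1)

def IsLNE {E : Type*} [NormedAddCommGroup E] (Z : Set E) (C : ℝ) : Prop :=
  ∀ x ∈ Z, ∀ y ∈ Z, innerDist Z x y ≤ ENNReal.ofReal (C * ‖x - y‖)

/-- coordinate bound in EuclideanSpace -/
lemma coord_le_dist (x y : EuclideanSpace ℝ (Fin 3)) (i : Fin 3) :
    |x i - y i| ≤ dist x y := by
  rw [EuclideanSpace.dist_eq]
  rw [← Real.sqrt_sq_eq_abs]
  apply Real.sqrt_le_sqrt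
  apply Finset.single_le_sum (f := fun j => dist (x j) (y j) ^ 2) (fun j _ => sq_nonneg _)
    (Finset.mem_univ i) |>.trans_eq' ?_
  rw [Real.dist_eq]
  rw [sq_abs]

theorem stmt_9 :
    ¬ ∃ U ∈ 𝓝 (0 : EuclideanSpace ℝ (Fin 3)), ∃ C : ℝ,
      IsLNE ({v : EuclideanSpace ℝ (Fin 3) | v 0 ^ 2 + v 1 ^ 3 + v 2 ^ 3 = 0} ∩ U) C := by
  rintro ⟨U, hU, C, hLNE⟩
  obtain ⟨ε, hε, hball⟩ := Metric.mem_nhds_iff.mp hU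
  set c : ℝ := max C 1 with hc
  have hc1 : (1:ℝ) ≤ c := le_max_right _ _
  have hc0 : (0:ℝ) < c := lt_of_lt_of_le one_pos hc1
  set t : ℝ := (min 1 (min ε (1/(4*c^2))))/2 with ht
  have ht0 : 0 < t := by
    apply div_pos _ two_pos
    exact lt_min one_pos (lt_min hε (by positivity))
  have ht1 : t ≤ 1/2 := by
    apply div_le_div_of_nonneg_right (min_le_left _ _) (by norm_num)
  have htε : t ≤ ε/2 :=
    div_le_div_of_nonneg_right ((min_le_right _ _).trans (min_le_left _ _)) (by norm_num)
  have htc : t < 1/(4*c^2) := by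
    calc t ≤ (1/(4*c^2))/2 :=
          div_le_div_of_nonneg_right ((min_le_right _ _).trans (min_le_right _ _)) (by norm_num)
      _ < 1/(4*c^2) := by positivity |> fun h => half_lt_self h
  set r : ℝ := Real.sqrt t with hr
  have hr0 : 0 < r := Real.sqrt_pos.mpr ht0
  have hr2 : r^2 = t := Real.sq_sqrt ht0.le
  set a : ℝ := t * r with ha
  have ha0 : 0 < a := mul_pos ht0 hr0
  have ha2 : a^2 = t^3 := by rw [ha, mul_pow, hr2]; ring
  -- the two points
  set p : EuclideanSpace ℝ (Fin 3) := WithLp.toLp 2 ![-a, -t, 0] with hp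
  set q : EuclideanSpace ℝ (Fin 3) := WithLp.toLp 2 ![a, -t, 0] with hq
  set X : Set (EuclideanSpace ℝ (Fin 3)) :=
    {v : EuclideanSpace ℝ (Fin 3) | v 0 ^ 2 + v 1 ^ 3 + v 2 ^ 3 = 0} with hX
  -- membership
  have hnorm : ∀ v : EuclideanSpace ℝ (Fin 3), ‖v‖ = Real.sqrt (v 0 ^2 + v 1^2 + v 2^2) := by
    intro v
    rw [EuclideanSpace.norm_eq]
    congr 1
    rw [Fin.sum_univ_three]
    simp [sq_abs]
  have hmemball : ∀ v : EuclideanSpace ℝ (Fin 3),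
      v 0 ^2 + v 1^2 + v 2^2 = t^3 + t^2 → v ∈ Metric.ball (0:EuclideanSpace ℝ (Fin 3)) ε := by
    intro v hv
    rw [Metric.mem_ball, dist_zero_right, hnorm, hv]
    rw [Real.sqrt_lt' hε]
    nlinarith [ht0, ht1, htε, hε]
  have hpmem : p ∈ X ∩ U := by
    constructor
    · show (p 0)^2 + (p 1)^3 + (p 2)^3 = 0
      simp only [hp, PiLp.toLp_apply, Matrix.cons_val_zero, Matrix.cons_val_one, Matrix.head_cons,
        Matrix.cons_val_two, Matrix.tail_cons]
      rw [neg_pow, neg_pow, ha2]; ring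
    · apply hball
      apply hmemball
      simp only [hp, PiLp.toLp_apply, Matrix.cons_val_zero, Matrix.cons_val_one, Matrix.head_cons,
        Matrix.cons_val_two, Matrix.tail_cons]
      rw [neg_pow, neg_pow, ha2]; ring
  have hqmem : q ∈ X ∩ U := by
    constructor
    · show (q 0)^2 + (q 1)^3 + (q 2)^3 = 0
      simp only [hq, PiLp.toLp_apply, Matrix.cons_val_zero, Matrix.cons_val_one, Matrix.head_cons,
        Matrix.cons_val_two, Matrix.tail_cons]
      rw [neg_pow, ha2]; ring
    · apply hball
      apply hmemball
      simp only [hq, PiLp.toLp_apply, Matrix.cons_val_zero, Matrix.cons_val_one, Matrix.head_cons,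
        Matrix.cons_val_two, Matrix.tail_cons]
      rw [neg_pow, ha2]; ring
  -- lower bound on innerDist
  have hlow : ENNReal.ofReal t ≤ innerDist (X ∩ U) p q := by
    rw [innerDist]
    refine le_iInf fun γ => le_iInf fun hcont => le_iInf fun hmaps => le_iInf fun h0 =>
      le_iInf fun h1 => ?_
    -- IVT: find s with γ s 0 = 0
    have hcoord : ContinuousOn (fun s => γ s 0) (Icc 0 1) :=
      (PiLp.continuous_apply 2 _ (0 : Fin 3)).comp_continuousOn hcont
    have hiv : (0:ℝ) ∈ Icc ((fun s => γ s 0) 0) ((fun s => γ s 0) 1) := by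
      simp only [h0, h1, hp, hq, PiLp.toLp_apply, Matrix.cons_val_zero]
      exact ⟨by linarith, by linarith⟩
    obtain ⟨s, hs01, hs0⟩ := intermediate_value_Icc (zero_le_one) hcoord hiv
    -- γ s ∈ X, so (γ s 1)^3 + (γ s 2)^3 = 0, so γ s 2 = - γ s 1
    have hsX : γ s ∈ X := (hmaps hs01).1
    have hs0' : γ s 0 = 0 := hs0
    have hcube : (γ s 1)^3 + (γ s 2)^3 = 0 := by
      have h' := hsX
      rw [hX, mem_setOf_eq, hs0'] at h'
      nlinarith [h']
    have hz : γ s 2 = -(γ s 1) := by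
      have h3 : Odd 3 := by decide
      have : (γ s 2)^3 = (-(γ s 1))^3 := by rw [Odd.neg_pow h3]; linarith
      exact (Odd.strictMono_pow (R := ℝ) h3).injective this
    set b : ℝ := γ s 1 with hb
    -- length lower bound via sum_le with chain 0, s, 1
    have hsum : ENNReal.ofReal t ≤ eVariationOn γ (Icc 0 1) := by
      set u : ℕ → ℝ := fun i => if i = 0 then 0 else if i = 1 then s else 1 with hu
      have humono : Monotone u := by
        apply monotone_nat_of_le_succ
        intro i
        match i with
        | 0 => simpa [hu] using hs01.1
        | 1 => simpa [hu] using hs01.2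
        | (n+2) => simp [hu]
      have hus : ∀ i, u i ∈ Icc (0:ℝ) 1 := by
        intro i
        match i with
        | 0 => simp [hu]
        | 1 => simpa [hu] using hs01
        | (n+2) => simp [hu]
      have := eVariationOn.sum_le (f := γ) (n := 2) humono hus
      rw [Finset.sum_range_succ, Finset.sum_range_one] at this
      simp only [hu] at this
      norm_num at this
      refine le_trans ?_ this
      -- edist bounds
      have e1 : ENNReal.ofReal |(-t) - b| ≤ edist (γ s) (γ 0) := by
        rw [edist_dist, ENNReal.ofReal_le_ofReal_iff dist_nonneg]
        calc |(-t) - b| = |γ 0 1 - γ s 1| := by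
              rw [h0, hb]; simp [hp, abs_sub_comm]
          _ ≤ dist (γ 0) (γ s) := coord_le_dist _ _ 1
          _ = dist (γ s) (γ 0) := dist_comm _ _
      have e2 : ENNReal.ofReal |b| ≤ edist (γ 1) (γ s) := by
        rw [edist_dist, ENNReal.ofReal_le_ofReal_iff dist_nonneg]
        calc |b| = |γ 1 2 - γ s 2| := by
              rw [h1, hz, hb]; simp [hq]
          _ ≤ dist (γ 1) (γ s) := coord_le_dist _ _ 2
      calc ENNReal.ofReal t ≤ ENNReal.ofReal (|(-t) - b| + |b|) := by
            apply ENNReal.ofReal_le_ofReal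
            calc t = |(-t - b) + b| := by
                  rw [show -t - b + b = -t by ring, abs_neg, abs_of_pos ht0]
              _ ≤ (|(-t) - b| + |b|) := abs_add_le _ _
        _ = ENNReal.ofReal |(-t) - b| + ENNReal.ofReal |b| :=
            ENNReal.ofReal_add (abs_nonneg _) (abs_nonneg _)
        _ ≤ edist (γ s) (γ 0) + edist (γ 1) (γ s) := add_le_add e1 e2
    exact hsum
  -- upper bound from LNE
  have hupper := hLNE p hpmem q hqmem
  have hdist : ‖p - q‖ = 2 * a := by
    rw [hnorm]
    have h0' : (p - q) 0 = -(2*a) := by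
      simp [hp, hq]; ring
    have h1' : (p - q) 1 = 0 := by simp [hp, hq]
    have h2' : (p - q) 2 = 0 := by simp [hp, hq]
    rw [h0', h1', h2']
    rw [show (-(2*a))^2 + 0^2 + 0^2 = (2*a)^2 by ring]
    exact Real.sqrt_sq (by positivity)
  rw [hdist] at hupper
  have hfinal : C * (2 * a) < t := by
    have hCle : C * (2*a) ≤ c * (2*a) := by
      apply mul_le_mul_of_nonneg_right (le_max_left _ _) (by positivity)
    have hrlt : r < 1/(2*c) := by
      rw [hr]
      rw [show (1:ℝ)/(2*c) = Real.sqrt ((1/(2*c))^2) from (Real.sqrt_sq (by positivity)).symm]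
      apply Real.sqrt_lt_sqrt ht0.le
      calc t < 1/(4*c^2) := htc
        _ = (1/(2*c))^2 := by field_simp; ring
    calc C * (2*a) ≤ c * (2*a) := hCle
      _ = 2*c*t*r := by rw [ha]; ring
      _ < 2*c*t*(1/(2*c)) := by
          apply mul_lt_mul_of_pos_left hrlt (by positivity)
      _ = t := by field_simp
  have := lt_of_le_of_lt (le_trans hlow hupper)
    (ENNReal.ofReal_lt_ofReal_iff ht0 |>.mpr hfinal)
  exact lt_irrefl _ this
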